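/- Let G be a simple graph with maximum degree Δ and α a proper (Δ+1)-edge coloring of G. For any vertex u and any non-saturated cycle fan X_u(α,v) in D_u(α), the colorings α and X_u^{-1}(α,v) are Kempe-equivalent. -/
import Mathlib


open SimpleGraph

/-- A proper edge coloring: edges of `G` sharing a vertex get different colors. -/
def IsProperEdgeColoring {V : Type*} (G : SimpleGraph V) {t : ℕ} (c : Sym2 V → Fin t) : Prop :=
  ∀ e₁ ∈ G.edgeSet, ∀ e₂ ∈ G.edgeSet, e₁ ≠ e₂ → (∃ v, v ∈ e₁ ∧ v ∈ e₂) → c e₁ ≠ c e₂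

/-- The chromatic index: least number of colors in a proper edge coloring. -/
noncomputable def chromaticIndex {V : Type*} (G : SimpleGraph V) : ℕ :=
  sInf {t | ∃ c : Sym2 V → Fin t, IsProperEdgeColoring G c}

/-- Color `c` is missing at vertex `w` under coloring `α`. -/
def MissingAt {V : Type*} (G : SimpleGraph V) {t : ℕ} (α : Sym2 V → Fin t) (c : Fin t)
    (w : V) : Prop :=
  ∀ e ∈ G.edgeSet, w ∈ e → α e ≠ c

/-- The subgraph `K_α(a,b)` induced by the edges colored `a` or `b`. -/
def bicolored {V : Type*} (G : SimpleGraph V) {t : ℕ} (α : Sym2 V → Fin t) (a b : Fin t) :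
    SimpleGraph V :=
  SimpleGraph.fromEdgeSet {e | e ∈ G.edgeSet ∧ (α e = a ∨ α e = b)}

/-- `β` is obtained from `α` by a single Kempe change: swapping two colors `a`, `b` on a
connected component of the bicolored subgraph `K_α(a,b)`. -/
def IsKempeSwap {V : Type*} (G : SimpleGraph V) {t : ℕ} (α β : Sym2 V → Fin t) : Prop :=
  ∃ a b : Fin t, ∃ C : (bicolored G α a b).ConnectedComponent,
    (∀ e ∈ G.edgeSet, (α e = a ∨ α e = b) →
      (∀ v ∈ e, (bicolored G α a b).connectedComponentMk v = C) →
      ((α e = a ∧ β e = b) ∨ (α e = b ∧ β e = a))) ∧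
    (∀ e : Sym2 V, (e ∉ G.edgeSet ∨ (α e ≠ a ∧ α e ≠ b) ∨
        ∃ v ∈ e, (bicolored G α a b).connectedComponentMk v ≠ C) → β e = α e)

/-- Kempe equivalence: reachability by a sequence of Kempe changes. -/
def KempeEquiv {V : Type*} (G : SimpleGraph V) {t : ℕ} (α β : Sym2 V → Fin t) : Prop :=
  Relation.ReflTransGen (IsKempeSwap G) α β

/-- `G` is chordless: in every cycle, any two nonconsecutive vertices are nonadjacent. -/
def Chordless {V : Type*} (G : SimpleGraph V) : Prop :=
  ∀ n : ℕ, 3 ≤ n → ∀ c : ZMod n → V, Function.Injective c →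
    (∀ i, G.Adj (c i) (c (i + 1))) →
    ∀ i j : ZMod n, j ≠ i → j ≠ i + 1 → i ≠ j + 1 → ¬ G.Adj (c i) (c j)

/-- An `α`-fan at `u`: edges `u x₀, …, u xₚ` with `m i` a color missing at `x i`
and `α (u x_{i+1}) = m i`. -/
structure IsFan {V : Type*} (G : SimpleGraph V) {t : ℕ} (α : Sym2 V → Fin t)
    (u : V) (p : ℕ) (x : ℕ → V) (m : ℕ → Fin t) : Prop where
  adj : ∀ i ≤ p, G.Adj u (x i)
  inj : ∀ i ≤ p, ∀ j ≤ p, x i = x j → i = j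
  missing : ∀ i ≤ p, MissingAt G α (m i) (x i)
  succ : ∀ i < p, α s(u, x (i + 1)) = m i

/-- The coloring `X_u^{-1}(α,v)`: each fan edge `u xᵢ` is recolored with `m i`,
all other edges keep their color. -/
def IsFanRecolor {V : Type*} {t : ℕ} (α : Sym2 V → Fin t)
    (u : V) (p : ℕ) (x : ℕ → V) (m : ℕ → Fin t) (β : Sym2 V → Fin t) : Prop :=
  (∀ i ≤ p, β s(u, x i) = m i) ∧ (∀ e : Sym2 V, (∀ i ≤ p, e ≠ s(u, x i)) → β e = α e)

/-- A cycle fan is saturated if for every `i` the component of `K_α(α(u xᵢ), m_α(u))`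
containing `u` also contains `x_{i-1}` (cyclically). -/
def SaturatedCycleFan {V : Type*} (G : SimpleGraph V) {t : ℕ} (α : Sym2 V → Fin t)
    (u : V) (p : ℕ) (x : ℕ → V) (mu : Fin t) : Prop :=
  ∀ i ≤ p, (bicolored G α (α s(u, x i)) mu).connectedComponentMk u =
    (bicolored G α (α s(u, x i)) mu).connectedComponentMk (x (if i = 0 then p else i - 1))

namespace KE

variable {V : Type*} {t : ℕ}

lemma bicolored_adj (G : SimpleGraph V) (α : Sym2 V → Fin t) (a b : Fin t) (v w : V) :
    (bicolored G α a b).Adj v w ↔ G.Adj v w ∧ (α s(v,w) = a ∨ α s(v,w) = b) := by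
  constructor
  · rintro ⟨⟨he, hc⟩, hne⟩
    exact ⟨G.mem_edgeSet.1 he, hc⟩
  · rintro ⟨h, hc⟩
    exact ⟨⟨G.mem_edgeSet.2 h, hc⟩, h.ne⟩

lemma reach_subset (H : SimpleGraph V) (S : Set V) {u v : V}
    (hcl : ∀ a ∈ S, ∀ b, H.Adj a b → b ∈ S) (hr : H.Reachable u v) (hu : u ∈ S) : v ∈ S := by
  obtain ⟨w⟩ := hr
  induction w with
  | nil => exact hu
  | cons h q ih => exact ih (hcl _ hu _ h)

lemma comp_eq_of_adj {H : SimpleGraph V} {v w : V} (h : H.Adj v w) :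
    H.connectedComponentMk v = H.connectedComponentMk w :=
  ConnectedComponent.eq.2 h.reachable

open Classical in
noncomputable def kswap (G : SimpleGraph V) (α : Sym2 V → Fin t) (a b : Fin t)
    (C : (bicolored G α a b).ConnectedComponent) : Sym2 V → Fin t :=
  fun e => if e ∈ G.edgeSet ∧ ∀ v ∈ e, (bicolored G α a b).connectedComponentMk v = C
    then (if α e = a then b else if α e = b then a else α e)
    else α e

lemma kswap_isKempeSwap (G : SimpleGraph V) (α : Sym2 V → Fin t) (a b : Fin t)
    (C : (bicolored G α a b).ConnectedComponent) : IsKempeSwap G α (kswap G α a b C) := by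
  classical
  refine ⟨a, b, C, ?_, ?_⟩
  · intro e he hc hcomp
    rw [kswap, if_pos ⟨he, hcomp⟩]
    rcases hc with hc | hc
    · exact Or.inl ⟨hc, by rw [if_pos hc]⟩
    · by_cases ha : α e = a
      · exact Or.inl ⟨ha, by rw [if_pos ha, ← hc, ha]⟩
      · exact Or.inr ⟨hc, by rw [if_neg ha, if_pos hc]⟩
  · intro e h
    rw [kswap]
    split_ifs with h1 h2 h3
    · rcases h with h | h | ⟨v, hv, hvc⟩
      · exact absurd h1.1 h
      · exact absurd h2 h.1
      · exact absurd (h1.2 v hv) hvc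
    · rcases h with h | h | ⟨v, hv, hvc⟩
      · exact absurd h1.1 h
      · exact absurd h3 h.2
      · exact absurd (h1.2 v hv) hvc
    · rfl
    · rfl

lemma kswap_cases (G : SimpleGraph V) (α : Sym2 V → Fin t) (a b : Fin t)
    (C : (bicolored G α a b).ConnectedComponent) (e : Sym2 V) :
    kswap G α a b C e = α e ∨
    ((e ∈ G.edgeSet ∧ ∀ v ∈ e, (bicolored G α a b).connectedComponentMk v = C) ∧
      ((α e = a ∧ kswap G α a b C e = b) ∨ (α e = b ∧ kswap G α a b C e = a))) := by
  classical
  rw [kswap]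
  split_ifs with h1 h2 h3
  · exact Or.inr ⟨h1, Or.inl ⟨h2, rfl⟩⟩
  · exact Or.inr ⟨h1, Or.inr ⟨h3, rfl⟩⟩
  · exact Or.inl rfl
  · exact Or.inl rfl

lemma kswap_eq_of_ne (G : SimpleGraph V) (α : Sym2 V → Fin t) (a b : Fin t)
    (C : (bicolored G α a b).ConnectedComponent) (e : Sym2 V)
    (ha : α e ≠ a) (hb : α e ≠ b) : kswap G α a b C e = α e := by
  classical
  rw [kswap]
  split_ifs <;> simp_all

lemma kswap_eq_of_comp_ne (G : SimpleGraph V) (α : Sym2 V → Fin t) (a b : Fin t)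
    (C : (bicolored G α a b).ConnectedComponent) (e : Sym2 V) (v : V) (hv : v ∈ e)
    (hc : (bicolored G α a b).connectedComponentMk v ≠ C) : kswap G α a b C e = α e := by
  classical
  rw [kswap, if_neg]
  rintro ⟨-, h⟩
  exact hc (h v hv)

lemma kswap_swap_a (G : SimpleGraph V) (α : Sym2 V → Fin t) (a b : Fin t)
    (C : (bicolored G α a b).ConnectedComponent) (e : Sym2 V) (he : e ∈ G.edgeSet)
    (hall : ∀ v ∈ e, (bicolored G α a b).connectedComponentMk v = C) (ha : α e = a) :
    kswap G α a b C e = b := by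
  classical
  rw [kswap, if_pos ⟨he, hall⟩, if_pos ha]

lemma kswap_swap_b (G : SimpleGraph V) (α : Sym2 V → Fin t) (a b : Fin t)
    (C : (bicolored G α a b).ConnectedComponent) (e : Sym2 V) (he : e ∈ G.edgeSet)
    (hall : ∀ v ∈ e, (bicolored G α a b).connectedComponentMk v = C) (hb : α e = b)
    (hab : α e ≠ a) : kswap G α a b C e = a := by
  classical
  rw [kswap, if_pos ⟨he, hall⟩, if_neg hab, if_pos hb]

end KE

namespace KE

variable {V : Type*} {t : ℕ}

/-- Helper: the vertices in a given connected component, via a closed set. -/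
lemma comp_subset (H : SimpleGraph V) (S : Set V) {u v : V}
    (hcl : ∀ a ∈ S, ∀ b, H.Adj a b → b ∈ S) (hu : u ∈ S)
    (h : H.connectedComponentMk v = H.connectedComponentMk u) : v ∈ S :=
  reach_subset H S hcl (ConnectedComponent.eq.1 h.symm) hu

open Classical in
/-- A single-edge Kempe swap: if the only `(a,b)`-colored edge at `u` and at `w`
is the edge `s(u,w)` itself (colored `a`), then recoloring it to `b` is a Kempe swap. -/
lemma single_swap (G : SimpleGraph V) (γ : Sym2 V → Fin t) (u w : V) (a b : Fin t)
    (hadj : G.Adj u w) (hcur : γ s(u,w) = a)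
    (hu : ∀ e ∈ G.edgeSet, u ∈ e → (γ e = a ∨ γ e = b) → e = s(u,w))
    (hw : ∀ e ∈ G.edgeSet, w ∈ e → (γ e = a ∨ γ e = b) → e = s(u,w)) :
    IsKempeSwap G γ (fun e => if e = s(u,w) then b else γ e) := by
  set H := bicolored G γ a b with hH
  set C := H.connectedComponentMk u with hC
  have hSclosed : ∀ v ∈ ({u, w} : Set V), ∀ z, H.Adj v z → z ∈ ({u, w} : Set V) := by
    intro v hv z hvz
    rw [bicolored_adj] at hvz
    obtain ⟨hGvz, hcol⟩ := hvz
    rcases hv with rfl | rfl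
    · have := hu s(v,z) (G.mem_edgeSet.2 hGvz) (Sym2.mem_mk_left v z) hcol
      rcases Sym2.eq_iff.1 this with ⟨-, h2⟩ | ⟨h1, h2⟩
      · exact Or.inr h2
      · exact Or.inl h2
    · have := hw s(v,z) (G.mem_edgeSet.2 hGvz) (Sym2.mem_mk_left v z) hcol
      rcases Sym2.eq_iff.1 this with ⟨h1, h2⟩ | ⟨h1, h2⟩
      · exact absurd h1.symm hadj.ne
      · exact Or.inl h2
  have hcompmem : ∀ v, H.connectedComponentMk v = C → v = u ∨ v = w := by
    intro v hv
    exact comp_subset H {u, w} hSclosed (Or.inl rfl) hv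
  have hadjH : H.Adj u w := by
    rw [bicolored_adj]
    exact ⟨hadj, Or.inl hcur⟩
  refine ⟨a, b, C, ?_, ?_⟩
  · intro e he hcol hcomp
    have heq : e = s(u, w) := by
      induction e with
      | h v₁ v₂ =>
        have h1 := hcompmem v₁ (hcomp v₁ (Sym2.mem_mk_left _ _))
        have h2 := hcompmem v₂ (hcomp v₂ (Sym2.mem_mk_right _ _))
        have hne : v₁ ≠ v₂ := by
          intro hd
          exact G.not_isDiag_of_mem_edgeSet he (by rw [Sym2.isDiag_iff_proj_eq]; exact hd)
        rcases h1 with rfl | rfl <;> rcases h2 with rfl | rfl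
        · exact absurd rfl hne
        · rfl
        · exact Sym2.eq_swap
        · exact absurd rfl hne
    subst heq
    exact Or.inl ⟨hcur, by simp⟩
  · intro e h
    by_cases he : e = s(u, w)
    · exfalso
      subst he
      rcases h with h | h | ⟨v, hv, hvc⟩
      · exact h (G.mem_edgeSet.2 hadj)
      · exact h.1 hcur
      · rcases Sym2.mem_iff.1 hv with rfl | rfl
        · exact hvc rfl
        · exact hvc (comp_eq_of_adj hadjH.symm)
    · simp [he]

/-- The cyclic index sequence for the fan inversion. -/
def jdx (i p k : ℕ) : ℕ := (i + p - k) % (p + 1)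

lemma jdx_le (i p k : ℕ) : jdx i p k ≤ p :=
  Nat.lt_succ_iff.1 (Nat.mod_lt _ (Nat.succ_pos p))

lemma jdx_val {i p : ℕ} (hi : i ≤ p) {k : ℕ} (hk : k ≤ p) :
    jdx i p k = if k < i then i - k - 1 else i + p - k := by
  rw [jdx]
  split_ifs with h
  · have : i + p - k = (i - k - 1) + 1 * (p + 1) := by omega
    rw [this, Nat.add_mul_mod_self_right, Nat.mod_eq_of_lt (by omega)]
  · exact Nat.mod_eq_of_lt (by omega)

lemma jdx_inj {i p : ℕ} (hi : i ≤ p) {k l : ℕ} (hk : k ≤ p) (hl : l ≤ p)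
    (h : jdx i p k = jdx i p l) : k = l := by
  rw [jdx_val hi hk, jdx_val hi hl] at h
  split_ifs at h <;> omega

lemma jdx_zero {i p : ℕ} (hi : i ≤ p) : jdx i p 0 = if i = 0 then p else i - 1 := by
  rw [jdx_val hi (Nat.zero_le p)]
  split_ifs <;> omega

lemma jdx_last {i p : ℕ} (hi : i ≤ p) : jdx i p p = i := by
  rw [jdx_val hi le_rfl]
  split_ifs <;> omega

lemma pred_mod {p k : ℕ} (hk1 : 1 ≤ k) (hkp : k ≤ p) : (k + p) % (p + 1) = k - 1 := by
  have : k + p = (k - 1) + 1 * (p + 1) := by omega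
  rw [this, Nat.add_mul_mod_self_right, Nat.mod_eq_of_lt (by omega)]

lemma zero_pred_mod (p : ℕ) : (0 + p) % (p + 1) = p := by
  rw [Nat.zero_add, Nat.mod_eq_of_lt (by omega)]

lemma jdx_succ {i p : ℕ} (hi : i ≤ p) {k : ℕ} (hk : k ≤ p) :
    (jdx i p k + 1) % (p + 1) = jdx i p ((k + p) % (p + 1)) := by
  rcases Nat.eq_zero_or_pos k with rfl | hk1
  · rw [zero_pred_mod, jdx_last hi, jdx_zero hi]
    split_ifs with h
    · subst h
      exact Nat.mod_self (p + 1)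
    · have : i - 1 + 1 = i := by omega
      rw [this]
      exact Nat.mod_eq_of_lt (by omega)
  · rw [pred_mod hk1 hk]
    have h1 := jdx_val hi hk
    have h2 := jdx_val hi (show k - 1 ≤ p by omega)
    by_cases hjk : jdx i p k = p
    · rw [hjk, Nat.mod_self]
      split_ifs at h1 h2 <;> omega
    · have : jdx i p k < p := lt_of_le_of_ne (jdx_le i p k) hjk
      rw [Nat.mod_eq_of_lt (by omega)]
      split_ifs at h1 h2 <;> omega

lemma jdx_surj {i p : ℕ} (hi : i ≤ p) {s : ℕ} (hs : s ≤ p) :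
    ∃ k ≤ p, jdx i p k = s := by
  refine ⟨jdx i p s, jdx_le i p s, ?_⟩
  have h1 := jdx_val hi hs
  have h2 := jdx_val hi (jdx_le i p s)
  split_ifs at h1 h2 <;> omega

end KE

namespace KE

variable {V : Type*} {t : ℕ}

open Classical in
noncomputable def gseq (γ0 : Sym2 V → Fin t) (E : ℕ → Sym2 V) (c : ℕ → Fin t) (p : ℕ) :
    ℕ → Sym2 V → Fin t
  | 0 => γ0
  | (k+1) => fun e => if k ≤ p ∧ e = E k then c k else gseq γ0 E c p k e

/-- Inverting a linear fan `(y 0, …, y p)` (with target colors `c`) by single-edge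
Kempe swaps. -/
lemma invert_chain (G : SimpleGraph V) (γ0 : Sym2 V → Fin t)
    (u : V) (y : ℕ → V) (Bc : ℕ → Fin t) (c : ℕ → Fin t) (p : ℕ)
    (hadj : ∀ k ≤ p, G.Adj u (y k))
    (hyne : ∀ k ≤ p, ∀ l ≤ p, y k = y l → k = l)
    (hinit : ∀ l ≤ p, γ0 s(u, y l) = Bc l)
    (hBc : ∀ k ≤ p, ∀ l ≤ p, Bc k = Bc l → k = l)
    (hcB : ∀ k ≤ p, ∀ l ≤ p, c k = Bc l → k = l + 1)
    (hcc : ∀ k ≤ p, ∀ l ≤ p, c k = c l → k = l)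
    (hnonfan_u : ∀ k ≤ p, ∀ e ∈ G.edgeSet, u ∈ e → (∀ l ≤ p, e ≠ s(u, y l)) →
        γ0 e ≠ Bc k ∧ γ0 e ≠ c k)
    (hnonfan_y : ∀ k ≤ p, ∀ e ∈ G.edgeSet, y k ∈ e → (∀ l ≤ p, e ≠ s(u, y l)) →
        γ0 e ≠ Bc k ∧ γ0 e ≠ c k) :
    ∃ γ1 : Sym2 V → Fin t,
      Relation.ReflTransGen (IsKempeSwap G) γ0 γ1 ∧
      (∀ l ≤ p, γ1 s(u, y l) = c l) ∧
      (∀ e, (∀ l ≤ p, e ≠ s(u, y l)) → γ1 e = γ0 e) := by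
  classical
  set g := gseq γ0 (fun k => s(u, y k)) c p with hg
  have hEne : ∀ k ≤ p, ∀ l ≤ p, s(u, y k) = s(u, y l) → k = l := by
    intro k hk l hl h
    rcases Sym2.eq_iff.1 h with ⟨-, h2⟩ | ⟨h1, h2⟩
    · exact hyne k hk l hl h2
    · exact absurd h1.symm (hadj l hl).ne'
  have main : ∀ k, k ≤ p + 1 →
      (∀ l ≤ p, g k s(u, y l) = if l < k then c l else Bc l) ∧
      (∀ e, (∀ l ≤ p, e ≠ s(u, y l)) → g k e = γ0 e) ∧
      Relation.ReflTransGen (IsKempeSwap G) γ0 (g k) := by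
    intro k
    induction k with
    | zero =>
      intro _
      refine ⟨fun l hl => ?_, fun e _ => rfl, .refl⟩
      simp only [Nat.not_lt_zero, if_neg (by omega : ¬ l < 0)]
      exact hinit l hl
    | succ k ih =>
      intro hk1
      have hk : k ≤ p := by omega
      obtain ⟨inv2, inv5, chain⟩ := ih (by omega)
      have hgsucc : ∀ e, g (k+1) e = if e = s(u, y k) then c k else g k e := by
        intro e
        rw [hg]
        show (if k ≤ p ∧ e = s(u, y k) then c k else gseq γ0 (fun k => s(u, y k)) c p k e) = _
        simp [hk]
      have hcur : g k s(u, y k) = Bc k := by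
        rw [inv2 k hk, if_neg (lt_irrefl k)]
      have hu_side : ∀ e ∈ G.edgeSet, u ∈ e → (g k e = Bc k ∨ g k e = c k) →
          e = s(u, y k) := by
        intro e he hue hcol
        by_cases hfe : ∃ l, l ≤ p ∧ e = s(u, y l)
        · obtain ⟨l, hl, rfl⟩ := hfe
          rw [inv2 l hl] at hcol
          split_ifs at hcol with hlk
          · exfalso
            rcases hcol with h | h
            · have := hcB l hl k hk h; omega
            · have := hcc l hl k hk h; omega
          · rcases hcol with h | h
            · have : l = k := hBc l hl k hk h
              rw [this]
            · exfalso
              have := hcB k hk l hl h.symm; omega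
        · rw [inv5 e (fun l hl h => hfe ⟨l, hl, h⟩)] at hcol
          rcases hcol with h | h
          · exact absurd h (hnonfan_u k hk e he hue (fun l hl h => hfe ⟨l, hl, h⟩)).1
          · exact absurd h (hnonfan_u k hk e he hue (fun l hl h => hfe ⟨l, hl, h⟩)).2
      have hw_side : ∀ e ∈ G.edgeSet, y k ∈ e → (g k e = Bc k ∨ g k e = c k) →
          e = s(u, y k) := by
        intro e he hye hcol
        by_cases hfe : ∃ l, l ≤ p ∧ e = s(u, y l)
        · obtain ⟨l, hl, rfl⟩ := hfe
          rcases Sym2.mem_iff.1 hye with h1 | h1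
          · exact absurd h1.symm (hadj k hk).ne
          · rw [hyne k hk l hl h1]
        · rw [inv5 e (fun l hl h => (hfe ⟨l, hl, h⟩))] at hcol
          rcases hcol with h | h
          · exact absurd h (hnonfan_y k hk e he hye (fun l hl h => (hfe ⟨l, hl, h⟩))).1
          · exact absurd h (hnonfan_y k hk e he hye (fun l hl h => (hfe ⟨l, hl, h⟩))).2
      have hswap := single_swap G (g k) u (y k) (Bc k) (c k) (hadj k hk) hcur hu_side hw_side
      have hswap' : IsKempeSwap G (g k) (g (k+1)) := by
        have : g (k+1) = fun e => if e = s(u, y k) then c k else g k e := funext hgsucc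
        rw [this]
        exact hswap
      refine ⟨?_, ?_, chain.tail hswap'⟩
      · intro l hl
        rw [hgsucc]
        by_cases hlk : l = k
        · subst hlk
          rw [if_pos rfl, if_pos (by omega)]
        · rw [if_neg (fun h => hlk (hEne l hl k hk h)), inv2 l hl]
          by_cases h2 : l < k
          · rw [if_pos h2, if_pos (by omega)]
          · rw [if_neg h2, if_neg (by omega)]
      · intro e hne
        rw [hgsucc, if_neg (hne k hk), inv5 e hne]
  obtain ⟨inv2, inv5, chain⟩ := main (p+1) le_rfl
  exact ⟨g (p+1), chain, fun l hl => by rw [inv2 l hl, if_pos (by omega)], inv5⟩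

end KE

/-- Lemma 2.2: for a non-saturated cycle fan `X_u(α,v)` in a `(Δ+1)`-coloring `α`,
the colorings `α` and `X_u^{-1}(α,v)` are Kempe-equivalent. -/
theorem stmt6 {V : Type*} [Fintype V] (G : SimpleGraph V) [DecidableRel G.Adj]
    (α : Sym2 V → Fin (G.maxDegree + 1)) (hα : IsProperEdgeColoring G α)
    (u : V) (p : ℕ) (x : ℕ → V) (m : ℕ → Fin (G.maxDegree + 1))
    (hfan : IsFan G α u p x m) (hcycle : m p = α s(u, x 0))
    (mu : Fin (G.maxDegree + 1)) (hmu : MissingAt G α mu u)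
    (hns : ¬ SaturatedCycleFan G α u p x mu)
    (β : Sym2 V → Fin (G.maxDegree + 1)) (hβ : IsFanRecolor α u p x m β) :
    KempeEquiv G α β := by
  classical
  obtain ⟨hβ1, hβ2⟩ := hβ
  have hp1 : 1 ≤ p := by
    by_contra hp
    have hp0 : p = 0 := by omega
    subst hp0
    exact hfan.missing 0 le_rfl s(u, x 0) (G.mem_edgeSet.2 (hfan.adj 0 le_rfl))
      (Sym2.mem_mk_right u (x 0)) hcycle.symm
  simp only [SaturatedCycleFan] at hns
  push_neg at hns
  obtain ⟨i, hi, hnsi⟩ := hns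
  have hadjk : ∀ k : ℕ, G.Adj u (x (KE.jdx i p k)) := fun k => hfan.adj _ (KE.jdx_le i p k)
  have hEmem : ∀ k : ℕ, s(u, x (KE.jdx i p k)) ∈ G.edgeSet := fun k => G.mem_edgeSet.2 (hadjk k)
  have hyne : ∀ k ≤ p, ∀ l ≤ p, x (KE.jdx i p k) = x (KE.jdx i p l) → k = l := by
    intro k hk l hl h
    exact KE.jdx_inj hi hk hl (hfan.inj _ (KE.jdx_le i p k) _ (KE.jdx_le i p l) h)
  have hEne : ∀ k ≤ p, ∀ l ≤ p, k ≠ l → s(u, x (KE.jdx i p k)) ≠ s(u, x (KE.jdx i p l)) := by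
    intro k hk l hl hne h
    rcases Sym2.eq_iff.1 h with ⟨-, h2⟩ | ⟨h1, -⟩
    · exact hne (hyne k hk l hl h2)
    · exact (hadjk l).ne h1
  have hBc : ∀ k ≤ p, ∀ l ≤ p, α s(u, x (KE.jdx i p k)) = α s(u, x (KE.jdx i p l)) → k = l := by
    intro k hk l hl h
    by_contra hne
    exact hα _ (hEmem k) _ (hEmem l) (hEne k hk l hl hne)
      ⟨u, Sym2.mem_mk_left _ _, Sym2.mem_mk_left _ _⟩ h
  have hmuB : ∀ k : ℕ, mu ≠ α s(u, x (KE.jdx i p k)) := by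
    intro k h
    exact hmu _ (hEmem k) (Sym2.mem_mk_left _ _) h.symm
  have huniqa : ∀ (k : ℕ) (e : Sym2 V), e ∈ G.edgeSet → u ∈ e →
      α e = α s(u, x (KE.jdx i p k)) → e = s(u, x (KE.jdx i p k)) := by
    intro k e he hue h
    by_contra hne
    exact hα e he _ (hEmem k) hne ⟨u, hue, Sym2.mem_mk_left _ _⟩ h
  have hmcol : ∀ k ≤ p, m (KE.jdx i p k) = α s(u, x (KE.jdx i p ((k + p) % (p + 1)))) := by
    intro k hk
    have h1 : α s(u, x ((KE.jdx i p k + 1) % (p + 1))) = m (KE.jdx i p k) := by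
      rcases lt_or_eq_of_le (KE.jdx_le i p k) with h | h
      · rw [Nat.mod_eq_of_lt (by omega)]
        exact hfan.succ _ h
      · rw [h, Nat.mod_self]
        exact hcycle.symm
    rw [← h1, KE.jdx_succ hi hk]
  have hmiss : ∀ k ≤ p,
      MissingAt G α (α s(u, x (KE.jdx i p ((k + p) % (p + 1))))) (x (KE.jdx i p k)) := by
    intro k hk
    rw [← hmcol k hk]
    exact hfan.missing _ (KE.jdx_le i p k)
  have hnsi' : (bicolored G α (α s(u, x (KE.jdx i p p))) mu).connectedComponentMk u ≠
      (bicolored G α (α s(u, x (KE.jdx i p p))) mu).connectedComponentMk (x (KE.jdx i p 0)) := by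
    rw [KE.jdx_last hi, KE.jdx_zero hi]
    exact hnsi
  set H1 := bicolored G α (α s(u, x (KE.jdx i p p))) mu with hH1
  set C1 := H1.connectedComponentMk (x (KE.jdx i p 0)) with hC1
  set α₁ := KE.kswap G α (α s(u, x (KE.jdx i p p))) mu C1 with hα₁
  have step1 : IsKempeSwap G α α₁ := KE.kswap_isKempeSwap G α _ mu C1
  have G1 : ∀ e, u ∈ e → α₁ e = α e := fun e hue =>
    KE.kswap_eq_of_comp_ne G α _ mu C1 e u hue hnsi'
  have hG3 : ∀ e ∈ G.edgeSet, x (KE.jdx i p 0) ∈ e → α₁ e ≠ mu := by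
    intro e he hxe h
    by_cases hmue : α e = mu
    · obtain ⟨w, rfl⟩ := Sym2.mem_iff_exists.1 hxe
      have hAdj : H1.Adj (x (KE.jdx i p 0)) w := by
        rw [hH1, KE.bicolored_adj]
        exact ⟨G.mem_edgeSet.1 he, Or.inr hmue⟩
      have hall : ∀ v ∈ s(x (KE.jdx i p 0), w), H1.connectedComponentMk v = C1 := by
        intro v hv
        rcases Sym2.mem_iff.1 hv with rfl | rfl
        · exact hC1.symm
        · rw [hC1]
          exact (KE.comp_eq_of_adj hAdj).symm
      have h2 := KE.kswap_swap_b G α _ mu C1 _ he hall hmue (by rw [hmue]; exact hmuB p)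
      exact hmuB p (h.symm.trans h2)
    · rcases KE.kswap_cases G α (α s(u, x (KE.jdx i p p))) mu C1 e with hL | ⟨-, hR⟩
      · exact hmue (hL.symm.trans h)
      · rcases hR with ⟨ha, -⟩ | ⟨ha, -⟩
        · have h3 := hmiss 0 (Nat.zero_le p) e he hxe
          rw [KE.zero_pred_mod] at h3
          exact h3 ha
        · exact hmue ha
  have hcB : ∀ k ≤ p, ∀ l ≤ p,
      (if k = 0 then mu else α s(u, x (KE.jdx i p (k-1)))) = α s(u, x (KE.jdx i p l)) →
      k = l + 1 := by
    intro k hk l hl h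
    split_ifs at h with hk0
    · exact absurd h (hmuB l)
    · have := hBc (k-1) (by omega) l hl h
      omega
  have hcc : ∀ k ≤ p, ∀ l ≤ p,
      (if k = 0 then mu else α s(u, x (KE.jdx i p (k-1)))) =
      (if l = 0 then mu else α s(u, x (KE.jdx i p (l-1)))) → k = l := by
    intro k hk l hl h
    split_ifs at h with h1 h2 h2
    · omega
    · exact absurd h (hmuB (l-1))
    · exact absurd h.symm (hmuB (k-1))
    · have := hBc (k-1) (by omega) (l-1) (by omega) h
      omega
  have hnonfanu : ∀ k ≤ p, ∀ e ∈ G.edgeSet, u ∈ e →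
      (∀ l ≤ p, e ≠ s(u, x (KE.jdx i p l))) →
      α₁ e ≠ α s(u, x (KE.jdx i p k)) ∧
      α₁ e ≠ (if k = 0 then mu else α s(u, x (KE.jdx i p (k-1)))) := by
    intro k hk e he hue hne
    rw [G1 e hue]
    constructor
    · intro h
      exact hne k hk (huniqa k e he hue h)
    · split_ifs with hk0
      · intro h
        exact hmu e he hue h
      · intro h
        exact hne (k-1) (by omega) (huniqa (k-1) e he hue h)
  have hnonfany : ∀ k ≤ p, ∀ e ∈ G.edgeSet, x (KE.jdx i p k) ∈ e →
      (∀ l ≤ p, e ≠ s(u, x (KE.jdx i p l))) →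
      α₁ e ≠ α s(u, x (KE.jdx i p k)) ∧
      α₁ e ≠ (if k = 0 then mu else α s(u, x (KE.jdx i p (k-1)))) := by
    intro k hk e he hxe hne
    constructor
    · intro h
      rcases KE.kswap_cases G α (α s(u, x (KE.jdx i p p))) mu C1 e with hL | ⟨⟨-, hall⟩, hR⟩
      · have hae : α e = α s(u, x (KE.jdx i p k)) := hL.symm.trans h
        exact hα e he _ (hEmem k) (hne k hk)
          ⟨x (KE.jdx i p k), hxe, Sym2.mem_mk_right _ _⟩ hae
      · rcases hR with ⟨-, hb⟩ | ⟨-, hb⟩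
        · exact hmuB k (hb.symm.trans h)
        · have hkp : p = k := hBc p le_rfl k hk (hb.symm.trans h)
          have h1 := hall (x (KE.jdx i p k)) hxe
          have hAdj : H1.Adj u (x (KE.jdx i p p)) := by
            rw [hH1, KE.bicolored_adj]
            exact ⟨hadjk p, Or.inl rfl⟩
          rw [← hkp] at h1
          exact hnsi' ((KE.comp_eq_of_adj hAdj).trans h1)
    · split_ifs with hk0
      · subst hk0
        exact fun h => hG3 e he hxe h
      · intro h
        rcases KE.kswap_cases G α (α s(u, x (KE.jdx i p p))) mu C1 e with hL | ⟨-, hR⟩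
        · have h3 := hmiss k hk e he hxe
          rw [KE.pred_mod (by omega) hk] at h3
          exact h3 (hL.symm.trans h)
        · rcases hR with ⟨-, hb⟩ | ⟨-, hb⟩
          · exact hmuB (k-1) (hb.symm.trans h)
          · have := hBc p le_rfl (k-1) (by omega) (hb.symm.trans h)
            omega
  obtain ⟨γ1, chain, hγ1fan', hγ1non⟩ := KE.invert_chain G α₁ u (fun k => x (KE.jdx i p k))
    (fun k => α s(u, x (KE.jdx i p k)))
    (fun k => if k = 0 then mu else α s(u, x (KE.jdx i p (k-1)))) p
    (fun k _ => hadjk k) hyne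
    (fun l _ => G1 _ (Sym2.mem_mk_left _ _))
    hBc hcB hcc hnonfanu hnonfany
  have hγ1fan : ∀ l ≤ p, γ1 s(u, x (KE.jdx i p l)) =
      if l = 0 then mu else α s(u, x (KE.jdx i p (l-1))) := fun l hl => hγ1fan' l hl
  have hγ10 : γ1 s(u, x (KE.jdx i p 0)) = mu := by
    have h := hγ1fan 0 (Nat.zero_le p)
    simpa using h
  set H3 := bicolored G γ1 (α s(u, x (KE.jdx i p p))) mu with hH3
  set C3 := H3.connectedComponentMk u with hC3
  have step3 : IsKempeSwap G γ1 (KE.kswap G γ1 (α s(u, x (KE.jdx i p p))) mu C3) :=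
    KE.kswap_isKempeSwap G γ1 _ mu C3
  have hK1 : ∀ e ∈ G.edgeSet, u ∈ e →
      (γ1 e = α s(u, x (KE.jdx i p p)) ∨ γ1 e = mu) → e = s(u, x (KE.jdx i p 0)) := by
    intro e he hue hcol
    by_cases hfe : ∃ l, l ≤ p ∧ e = s(u, x (KE.jdx i p l))
    · obtain ⟨l, hl, rfl⟩ := hfe
      rw [hγ1fan l hl] at hcol
      split_ifs at hcol with hl0
      · subst hl0; rfl
      · rcases hcol with h | h
        · have := hBc (l-1) (by omega) p le_rfl h
          omega
        · exact absurd h.symm (hmuB (l-1))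
    · rw [hγ1non e (fun l hl h => hfe ⟨l, hl, h⟩), G1 e hue] at hcol
      rcases hcol with h | h
      · exact absurd (huniqa p e he hue h) (fun hh => hfe ⟨p, le_rfl, hh⟩)
      · exact absurd h (hmu e he hue)
  have hadjH3 : H3.Adj u (x (KE.jdx i p 0)) := by
    rw [hH3, KE.bicolored_adj]
    exact ⟨hadjk 0, Or.inr hγ10⟩
  have hy0C3 : H3.connectedComponentMk (x (KE.jdx i p 0)) = C3 := by
    rw [hC3]
    exact (KE.comp_eq_of_adj hadjH3).symm
  have hK3 : ∀ v, H1.connectedComponentMk v = C1 → H3.connectedComponentMk v = C3 := by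
    have hclosed : ∀ a ∈ {w | H1.connectedComponentMk w = C1 ∧
        H3.connectedComponentMk w = C3}, ∀ b, H1.Adj a b →
        b ∈ {w | H1.connectedComponentMk w = C1 ∧ H3.connectedComponentMk w = C3} := by
      rintro a ⟨ha1, ha3⟩ b hab
      have hbC1 : H1.connectedComponentMk b = C1 := (KE.comp_eq_of_adj hab).symm.trans ha1
      refine ⟨hbC1, ?_⟩
      have hab' := hab
      rw [hH1, KE.bicolored_adj] at hab'
      obtain ⟨hGab, hcolab⟩ := hab'
      have hnua : a ≠ u := by
        intro h
        subst h
        exact hnsi' ha1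
      have hnub : b ≠ u := by
        intro h
        subst h
        exact hnsi' hbC1
      have hnonfan : ∀ l ≤ p, s(a, b) ≠ s(u, x (KE.jdx i p l)) := by
        intro l hl h
        have hu_mem : u ∈ s(a, b) := by rw [h]; exact Sym2.mem_mk_left _ _
        rcases Sym2.mem_iff.1 hu_mem with h1 | h1
        · exact hnua h1.symm
        · exact hnub h1.symm
      have hall : ∀ z ∈ s(a, b), H1.connectedComponentMk z = C1 := by
        intro z hz
        rcases Sym2.mem_iff.1 hz with rfl | rfl
        exacts [ha1, hbC1]
      have hemem : s(a, b) ∈ G.edgeSet := G.mem_edgeSet.2 hGab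
      have hγ1ab : γ1 s(a, b) = α₁ s(a, b) := hγ1non _ hnonfan
      have hα₁ab : α₁ s(a, b) = α s(u, x (KE.jdx i p p)) ∨ α₁ s(a, b) = mu := by
        rcases hcolab with h | h
        · right
          exact KE.kswap_swap_a G α _ mu C1 _ hemem hall h
        · left
          exact KE.kswap_swap_b G α _ mu C1 _ hemem hall h (by rw [h]; exact hmuB p)
      have hadj3 : H3.Adj a b := by
        rw [hH3, KE.bicolored_adj]
        refine ⟨hGab, ?_⟩
        rw [hγ1ab]
        exact hα₁ab
      exact (KE.comp_eq_of_adj hadj3).symm.trans ha3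
    intro v hv
    have hv' : H1.connectedComponentMk v = H1.connectedComponentMk (x (KE.jdx i p 0)) := by
      rw [hC1] at hv; exact hv
    have hmem := KE.comp_subset (u := x (KE.jdx i p 0)) (v := v) H1
      {w | H1.connectedComponentMk w = C1 ∧ H3.connectedComponentMk w = C3}
      hclosed ⟨hC1.symm, hy0C3⟩ hv'
    exact hmem.2
  have hK2 : ∀ v, H3.connectedComponentMk v = C3 →
      v = u ∨ H1.connectedComponentMk v = C1 := by
    have hclosed : ∀ a ∈ {w | w = u ∨ H1.connectedComponentMk w = C1}, ∀ b, H3.Adj a b →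
        b ∈ {w | w = u ∨ H1.connectedComponentMk w = C1} := by
      intro a ha b hab
      have hab' := hab
      rw [hH3, KE.bicolored_adj] at hab'
      obtain ⟨hGab, hcolab⟩ := hab'
      have hemem : s(a, b) ∈ G.edgeSet := G.mem_edgeSet.2 hGab
      rcases ha with rfl | ha
      · have h := hK1 s(a, b) hemem (Sym2.mem_mk_left _ _) hcolab
        rcases Sym2.eq_iff.1 h with ⟨-, h2⟩ | ⟨h1, -⟩
        · right
          rw [h2, hC1]
        · exact absurd h1 (hadjk 0).ne
      · by_cases hbu : b = u
        · exact Or.inl hbu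
        · have hau : a ≠ u := by
            intro h
            subst h
            exact hnsi' ha
          have hnonfan : ∀ l ≤ p, s(a, b) ≠ s(u, x (KE.jdx i p l)) := by
            intro l hl h
            have hu_mem : u ∈ s(a, b) := by rw [h]; exact Sym2.mem_mk_left _ _
            rcases Sym2.mem_iff.1 hu_mem with h1 | h1
            · exact hau h1.symm
            · exact hbu h1.symm
          have hγ1ab : γ1 s(a, b) = α₁ s(a, b) := hγ1non _ hnonfan
          rw [hγ1ab] at hcolab
          rcases KE.kswap_cases G α (α s(u, x (KE.jdx i p p))) mu C1 s(a, b) with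
            hL | ⟨⟨-, hall⟩, -⟩
          · have hA1 : H1.Adj a b := by
              rw [hH1, KE.bicolored_adj]
              refine ⟨hGab, ?_⟩
              rcases hcolab with h | h
              · exact Or.inl (hL.symm.trans h)
              · exact Or.inr (hL.symm.trans h)
            exact Or.inr ((KE.comp_eq_of_adj hA1).symm.trans ha)
          · exact Or.inr (hall b (Sym2.mem_mk_right a b))
    intro v hv
    have hv' : H3.connectedComponentMk v = H3.connectedComponentMk u := by
      rw [hC3] at hv; exact hv
    exact KE.comp_subset (u := u) (v := v) H3 {w | w = u ∨ H1.connectedComponentMk w = C1}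
      hclosed (Or.inl rfl) hv'
  have hfinal : ∀ e, KE.kswap G γ1 (α s(u, x (KE.jdx i p p))) mu C3 e = β e := by
    intro e
    by_cases hfe : ∃ l, l ≤ p ∧ e = s(u, x (KE.jdx i p l))
    · obtain ⟨l, hl, rfl⟩ := hfe
      have hβval : β s(u, x (KE.jdx i p l)) = m (KE.jdx i p l) := hβ1 _ (KE.jdx_le i p l)
      rw [hmcol l hl] at hβval
      by_cases hl0 : l = 0
      · subst hl0
        rw [hβval, KE.zero_pred_mod]
        have hall : ∀ v ∈ s(u, x (KE.jdx i p 0)), H3.connectedComponentMk v = C3 := by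
          intro v hv
          rcases Sym2.mem_iff.1 hv with rfl | rfl
          · exact hC3.symm
          · exact hy0C3
        exact KE.kswap_swap_b G γ1 _ mu C3 _ (hEmem 0) hall hγ10 (by rw [hγ10]; exact hmuB p)
      · have hc : γ1 s(u, x (KE.jdx i p l)) = α s(u, x (KE.jdx i p (l-1))) := by
          rw [hγ1fan l hl, if_neg hl0]
        have hne1 : γ1 s(u, x (KE.jdx i p l)) ≠ α s(u, x (KE.jdx i p p)) := by
          rw [hc]
          intro h
          have := hBc (l-1) (by omega) p le_rfl h
          omega
        have hne2 : γ1 s(u, x (KE.jdx i p l)) ≠ mu := by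
          rw [hc]
          exact fun h => (hmuB (l-1)) h.symm
        rw [hβval, KE.pred_mod (by omega) hl,
          KE.kswap_eq_of_ne G γ1 _ mu C3 _ hne1 hne2, hc]
    · have hne : ∀ l ≤ p, e ≠ s(u, x (KE.jdx i p l)) := fun l hl h => hfe ⟨l, hl, h⟩
      have hβe : β e = α e := by
        apply hβ2
        intro s hs
        obtain ⟨k, hk, hjk⟩ := KE.jdx_surj hi hs
        rw [← hjk]
        exact hne k hk
      have hγ1e : γ1 e = α₁ e := hγ1non e hne
      rw [hβe]
      rcases KE.kswap_cases G α (α s(u, x (KE.jdx i p p))) mu C1 e with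
        hL | ⟨⟨hemem, hall⟩, hR⟩
      · rcases KE.kswap_cases G γ1 (α s(u, x (KE.jdx i p p))) mu C3 e with
          hL3 | ⟨⟨hemem3, hall3⟩, hR3⟩
        · rw [hL3, hγ1e]
          exact hL
        · exfalso
          have hcol : α e = α s(u, x (KE.jdx i p p)) ∨ α e = mu := by
            rcases hR3 with ⟨h, -⟩ | ⟨h, -⟩
            · exact Or.inl (hL.symm.trans (hγ1e.symm.trans h))
            · exact Or.inr (hL.symm.trans (hγ1e.symm.trans h))
          have hep : ∀ z ∈ e, z = u ∨ H1.connectedComponentMk z = C1 :=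
            fun z hz => hK2 z (hall3 z hz)
          by_cases hu_mem : u ∈ e
          · rcases hcol with h | h
            · exact hne p le_rfl (huniqa p e hemem3 hu_mem h)
            · exact hmu e hemem3 hu_mem h
          · have hallC1 : ∀ z ∈ e, H1.connectedComponentMk z = C1 := by
              intro z hz
              rcases hep z hz with rfl | h
              · exact absurd hz hu_mem
              · exact h
            rcases hcol with h | h
            · have h2 := KE.kswap_swap_a G α _ mu C1 e hemem3 hallC1 h
              exact hmuB p (h2.symm.trans (hL.trans h))
            · have h2 := KE.kswap_swap_b G α _ mu C1 e hemem3 hallC1 h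
                (by rw [h]; exact hmuB p)
              exact hmuB p ((hL.trans h).symm.trans h2)
      · have hall3 : ∀ z ∈ e, H3.connectedComponentMk z = C3 :=
          fun z hz => hK3 z (hall z hz)
        rcases hR with ⟨ha, hb⟩ | ⟨ha, hb⟩
        · have h1 : γ1 e = mu := hγ1e.trans hb
          rw [KE.kswap_swap_b G γ1 (α s(u, x (KE.jdx i p p))) mu C3 e hemem hall3 h1
            (by rw [h1]; exact hmuB p), ha]
        · have h1 : γ1 e = α s(u, x (KE.jdx i p p)) := hγ1e.trans hb
          rw [KE.kswap_swap_a G γ1 (α s(u, x (KE.jdx i p p))) mu C3 e hemem hall3 h1, ha]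
  have hβeq : β = KE.kswap G γ1 (α s(u, x (KE.jdx i p p))) mu C3 :=
    funext fun e => (hfinal e).symm
  show Relation.ReflTransGen (IsKempeSwap G) α β
  rw [hβeq]
  exact (Relation.ReflTransGen.head step1 chain).tail step3
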